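/- arXiv:2103.03942 — 2 statements merged into one kernel-verified Lean document; each statement's English description precedes it below -/
import Mathlib

section
/- Let p > 3 be a prime. For the one-parameter family y² = x³ − t² x + t⁴, the first-moment sum satisfies ∑_{t mod p} a_t(p) = −2p, where a_t(p) := −∑_{x mod p} χ(x³ − t² x + t⁴). -/
open Finset

section Aux

variable {p : ℕ} [Fact p.Prime]

private lemma hchar (hp : 3 < p) : ringChar (ZMod p) ≠ 2 := by
  rw [ZMod.ringChar_zmod_n]; omega

/-- Sum of the quadratic character over all elements except `a`. -/
private lemma sum_erase_char (hp : 3 < p) (a : ZMod p) :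
    ∑ w ∈ univ.erase a, quadraticChar (ZMod p) w = - quadraticChar (ZMod p) a := by
  have h0 := quadraticChar_sum_zero (hchar hp)
  rw [← Finset.add_sum_erase univ _ (mem_univ a)] at h0
  linarith

/-- Cube of the character equals the character. -/
private lemma char_cube (x : ZMod p) :
    quadraticChar (ZMod p) (x ^ 3) = quadraticChar (ZMod p) x := by
  rcases eq_or_ne x 0 with rfl | hx
  · simp
  · have : x ^ 3 = x * x ^ 2 := by ring
    rw [this, map_mul, quadraticChar_sq_one' hx, mul_one]

/-- `∑_{s ≠ 0} χ(a + b s⁻¹) = -χ(a)` when `b ≠ 0`. -/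
private lemma sum_inv_shift (hp : 3 < p) (a : ZMod p) {b : ZMod p} (hb : b ≠ 0) :
    ∑ s ∈ univ.erase 0, quadraticChar (ZMod p) (a + b * s⁻¹)
      = - quadraticChar (ZMod p) a := by
  rw [← sum_erase_char hp a]
  refine Finset.sum_nbij' (fun s => a + b * s⁻¹) (fun w => b * (w - a)⁻¹) ?_ ?_ ?_ ?_ ?_
  · intro s hs
    simp only [mem_erase, mem_univ, and_true] at hs ⊢
    intro h
    have : b * s⁻¹ = 0 := by linear_combination h
    rcases mul_eq_zero.mp this with h' | h'
    · exact hb h'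
    · exact hs (inv_eq_zero.mp h')
  · intro w hw
    simp only [mem_erase, mem_univ, and_true] at hw ⊢
    intro h
    rcases mul_eq_zero.mp h with h' | h'
    · exact hb h'
    · exact hw (sub_eq_zero.mp (inv_eq_zero.mp h'))
  · intro s hs
    simp only [mem_erase, mem_univ, and_true] at hs
    field_simp
    rw [show a * s + b - a * s = b from by ring, div_self hb]
  · intro w hw
    simp only [mem_erase, mem_univ, and_true] at hw
    have hws : w - a ≠ 0 := sub_ne_zero.mpr hw
    field_simp
    ring
  · intro s hs
    rfl

/-- `∑_s χ(a s² + b s) = -χ(a)` when `a ≠ 0` and `b ≠ 0`. -/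
private lemma sum_quad_no_const (hp : 3 < p) {a b : ZMod p} (ha : a ≠ 0) (hb : b ≠ 0) :
    ∑ s : ZMod p, quadraticChar (ZMod p) (a * s ^ 2 + b * s)
      = - quadraticChar (ZMod p) a := by
  rw [← Finset.sum_erase_add univ _ (mem_univ 0)]
  have h0 : quadraticChar (ZMod p) (a * 0 ^ 2 + b * 0) = 0 := by
    simp
  rw [h0, add_zero, ← sum_inv_shift hp a hb]
  refine Finset.sum_congr rfl fun s hs => ?_
  simp only [mem_erase, mem_univ, and_true] at hs
  have key : a * s ^ 2 + b * s = s ^ 2 * (a + b * s⁻¹) := by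
    field_simp
  rw [key, map_mul, quadraticChar_sq_one' hs, one_mul]

/-- `∑_t χ(a t² + b) = -χ(a)` when `a ≠ 0` and `b ≠ 0`. -/
private lemma sum_quad (hp : 3 < p) {a b : ZMod p} (ha : a ≠ 0) (hb : b ≠ 0) :
    ∑ t : ZMod p, quadraticChar (ZMod p) (a * t ^ 2 + b)
      = - quadraticChar (ZMod p) a := by
  classical
  -- fiber over s = t^2
  have fib : ∑ t : ZMod p, quadraticChar (ZMod p) (a * t ^ 2 + b)
      = ∑ s : ZMod p, ∑ t ∈ univ.filter (fun t => t ^ 2 = s),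
          quadraticChar (ZMod p) (a * t ^ 2 + b) :=
    (Finset.sum_fiberwise univ (fun t => t ^ 2) _).symm
  have inner : ∀ s : ZMod p,
      ∑ t ∈ univ.filter (fun t => t ^ 2 = s), quadraticChar (ZMod p) (a * t ^ 2 + b)
        = (quadraticChar (ZMod p) s + 1) * quadraticChar (ZMod p) (a * s + b) := by
    intro s
    have hcard : ((univ.filter (fun t : ZMod p => t ^ 2 = s)).card : ℤ)
        = quadraticChar (ZMod p) s + 1 := by
      have := quadraticChar_card_sqrts (hchar hp) s
      rw [← this]
      congr 1
      rw [Set.toFinset_setOf]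
    calc ∑ t ∈ univ.filter (fun t => t ^ 2 = s), quadraticChar (ZMod p) (a * t ^ 2 + b)
        = ∑ t ∈ univ.filter (fun t : ZMod p => t ^ 2 = s),
            quadraticChar (ZMod p) (a * s + b) := by
          refine Finset.sum_congr rfl fun t ht => ?_
          simp only [mem_filter, mem_univ, true_and] at ht
          rw [ht]
      _ = ((univ.filter (fun t : ZMod p => t ^ 2 = s)).card : ℤ)
            * quadraticChar (ZMod p) (a * s + b) := by
          rw [Finset.sum_const, nsmul_eq_mul]
      _ = (quadraticChar (ZMod p) s + 1) * quadraticChar (ZMod p) (a * s + b) := by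
          rw [hcard]
  rw [fib]
  simp only [inner]
  have expand : ∀ s : ZMod p,
      (quadraticChar (ZMod p) s + 1) * quadraticChar (ZMod p) (a * s + b)
        = quadraticChar (ZMod p) (a * s ^ 2 + b * s) + quadraticChar (ZMod p) (a * s + b) := by
    intro s
    have : quadraticChar (ZMod p) s * quadraticChar (ZMod p) (a * s + b)
        = quadraticChar (ZMod p) (a * s ^ 2 + b * s) := by
      rw [← map_mul]; congr 1; ring
    linear_combination this
  simp only [expand]
  rw [Finset.sum_add_distrib, sum_quad_no_const hp ha hb]
  have affine : ∑ s : ZMod p, quadraticChar (ZMod p) (a * s + b) = 0 := by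
    rw [← quadraticChar_sum_zero (hchar hp)]
    exact Fintype.sum_equiv ((Equiv.mulLeft₀ a ha).trans (Equiv.addRight b)) _ _ (fun s => rfl)
  rw [affine, add_zero]

end Aux

/-- For a prime `p > 3` and the one-parameter family
`y² = x³ - t² x + t⁴`, the first-moment sum equals `-2p`. -/
theorem first_moment_family_five (p : ℕ) [Fact p.Prime] (hp : 3 < p) :
    ∑ t : ZMod p,
      (-∑ x : ZMod p,
        legendreSym p ((x.val : ℤ) ^ 3 - (t.val : ℤ) ^ 2 * (x.val : ℤ)
          + (t.val : ℤ) ^ 4)) = -2 * (p : ℤ) := by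
  have cast_eq : ∀ t x : ZMod p,
      legendreSym p ((x.val : ℤ) ^ 3 - (t.val : ℤ) ^ 2 * (x.val : ℤ) + (t.val : ℤ) ^ 4)
        = quadraticChar (ZMod p) (x ^ 3 - t ^ 2 * x + t ^ 4) := by
    intro t x
    simp only [legendreSym]
    congr 1
    push_cast [ZMod.natCast_val, ZMod.cast_id]
    ring
  simp only [cast_eq]
  have main : ∑ t : ZMod p, ∑ x : ZMod p,
      quadraticChar (ZMod p) (x ^ 3 - t ^ 2 * x + t ^ 4) = 2 * (p : ℤ) := by
    rw [← Finset.add_sum_erase univ _ (mem_univ (0 : ZMod p))]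
    have h0 : ∑ x : ZMod p,
        quadraticChar (ZMod p) (x ^ 3 - (0 : ZMod p) ^ 2 * x + (0 : ZMod p) ^ 4) = 0 := by
      have hpt : ∀ x : ZMod p,
          quadraticChar (ZMod p) (x ^ 3 - (0 : ZMod p) ^ 2 * x + (0 : ZMod p) ^ 4)
            = quadraticChar (ZMod p) x := by
        intro x
        rw [show x ^ 3 - (0 : ZMod p) ^ 2 * x + (0 : ZMod p) ^ 4 = x ^ 3 from by ring,
          char_cube]
      simp only [hpt]
      exact quadraticChar_sum_zero (hchar hp)
    rw [h0, zero_add]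
    have sub1 : ∀ t ∈ univ.erase (0 : ZMod p),
        ∑ x : ZMod p, quadraticChar (ZMod p) (x ^ 3 - t ^ 2 * x + t ^ 4)
          = ∑ u : ZMod p, quadraticChar (ZMod p) (u ^ 3 * t ^ 2 + (1 - u)) := by
      intro t ht
      have htne : t ≠ 0 := (mem_erase.mp ht).1
      have ht2 : t ^ 2 ≠ 0 := pow_ne_zero 2 htne
      refine (Fintype.sum_equiv (Equiv.mulLeft₀ (t ^ 2) ht2)
        (fun u => quadraticChar (ZMod p) (u ^ 3 * t ^ 2 + (1 - u)))
        (fun x => quadraticChar (ZMod p) (x ^ 3 - t ^ 2 * x + t ^ 4)) fun u => ?_).symm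
      show quadraticChar (ZMod p) (u ^ 3 * t ^ 2 + (1 - u))
        = quadraticChar (ZMod p) ((t ^ 2 * u) ^ 3 - t ^ 2 * (t ^ 2 * u) + t ^ 4)
      rw [show (t ^ 2 * u) ^ 3 - t ^ 2 * (t ^ 2 * u) + t ^ 4
          = (t ^ 2) ^ 2 * (u ^ 3 * t ^ 2 + (1 - u)) from by ring,
        map_mul, quadraticChar_sq_one' ht2, one_mul]
    rw [Finset.sum_congr rfl sub1, Finset.sum_comm]
    have cardE : ((univ.erase (0 : ZMod p)).card : ℤ) = (p : ℤ) - 1 := by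
      rw [Finset.card_erase_of_mem (mem_univ _), Finset.card_univ, ZMod.card]
      omega
    have h1mem : (1 : ZMod p) ∈ univ.erase (0 : ZMod p) :=
      mem_erase.mpr ⟨one_ne_zero, mem_univ _⟩
    have G0 : ∑ t ∈ univ.erase (0 : ZMod p),
        quadraticChar (ZMod p) ((0 : ZMod p) ^ 3 * t ^ 2 + (1 - 0)) = (p : ℤ) - 1 := by
      have hpt : ∀ t ∈ univ.erase (0 : ZMod p),
          quadraticChar (ZMod p) ((0 : ZMod p) ^ 3 * t ^ 2 + (1 - 0)) = 1 := by
        intro t _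
        rw [show (0 : ZMod p) ^ 3 * t ^ 2 + (1 - 0) = 1 from by ring, map_one]
      rw [Finset.sum_congr rfl hpt, Finset.sum_const, nsmul_eq_mul, mul_one, cardE]
    have G1 : ∑ t ∈ univ.erase (0 : ZMod p),
        quadraticChar (ZMod p) ((1 : ZMod p) ^ 3 * t ^ 2 + (1 - 1)) = (p : ℤ) - 1 := by
      have hpt : ∀ t ∈ univ.erase (0 : ZMod p),
          quadraticChar (ZMod p) ((1 : ZMod p) ^ 3 * t ^ 2 + (1 - 1)) = 1 := by
        intro t ht
        rw [show (1 : ZMod p) ^ 3 * t ^ 2 + (1 - 1) = t ^ 2 from by ring,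
          quadraticChar_sq_one' (mem_erase.mp ht).1]
      rw [Finset.sum_congr rfl hpt, Finset.sum_const, nsmul_eq_mul, mul_one, cardE]
    have Gs : ∀ u ∈ (univ.erase (0 : ZMod p)).erase 1,
        ∑ t ∈ univ.erase (0 : ZMod p), quadraticChar (ZMod p) (u ^ 3 * t ^ 2 + (1 - u))
          = - quadraticChar (ZMod p) u - quadraticChar (ZMod p) (1 - u) := by
      intro u hu
      have hu1 : u ≠ 1 := (mem_erase.mp hu).1
      have hu0 : u ≠ 0 := (mem_erase.mp (mem_erase.mp hu).2).1
      have hb : (1 : ZMod p) - u ≠ 0 := sub_ne_zero.mpr (Ne.symm hu1)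
      have hall := sum_quad hp (pow_ne_zero 3 hu0) hb
      rw [← Finset.sum_erase_add univ _ (mem_univ (0 : ZMod p))] at hall
      rw [show u ^ 3 * (0 : ZMod p) ^ 2 + (1 - u) = 1 - u from by ring] at hall
      rw [char_cube] at hall
      linarith
    rw [← Finset.add_sum_erase univ _ (mem_univ (0 : ZMod p)), G0,
      ← Finset.add_sum_erase _ _ h1mem, G1, Finset.sum_congr rfl Gs]
    have hs1 : ∑ u ∈ (univ.erase (0 : ZMod p)).erase 1, quadraticChar (ZMod p) u = -1 := by
      have h0' := quadraticChar_sum_zero (hchar hp)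
      rw [← Finset.add_sum_erase univ _ (mem_univ (0 : ZMod p)),
        ← Finset.add_sum_erase _ _ h1mem, map_one] at h0'
      simp only [MulChar.map_zero] at h0'
      linarith
    have hs2 : ∑ u ∈ (univ.erase (0 : ZMod p)).erase 1,
        quadraticChar (ZMod p) (1 - u) = -1 := by
      rw [← hs1]
      refine Finset.sum_nbij' (fun u => 1 - u) (fun u => 1 - u) ?_ ?_ ?_ ?_ ?_
      · intro u hu
        have hu1 : u ≠ 1 := (mem_erase.mp hu).1
        have hu0 : u ≠ 0 := (mem_erase.mp (mem_erase.mp hu).2).1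
        refine mem_erase.mpr ⟨?_, mem_erase.mpr ⟨sub_ne_zero.mpr (Ne.symm hu1), mem_univ _⟩⟩
        intro h
        exact hu0 (by linear_combination -h)
      · intro u hu
        have hu1 : u ≠ 1 := (mem_erase.mp hu).1
        have hu0 : u ≠ 0 := (mem_erase.mp (mem_erase.mp hu).2).1
        refine mem_erase.mpr ⟨?_, mem_erase.mpr ⟨sub_ne_zero.mpr (Ne.symm hu1), mem_univ _⟩⟩
        intro h
        exact hu0 (by linear_combination -h)
      · intro u _; ring
      · intro u _; ring
      · intro u _; rfl
    rw [Finset.sum_sub_distrib] at *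
    rw [Finset.sum_neg_distrib] at *
    rw [hs1, hs2]
    ring
  rw [Finset.sum_neg_distrib, main]
  ring
end

section
/- Let p ≥ 5 be a prime and let a, b, c, d be integers with p not dividing d. For the one-parameter family y² = 4x³ + a x² + b x + c + d t, the second-moment sum satisfies: if p does not divide a² − 12b, then ∑_{t mod p} a_t(p)² = p² − p − p·χ(−48) − p·χ(a² − 12b), and if p divides a² − 12b, then ∑_{t mod p} a_t(p)² = p² − p + p(p − 1)·χ(−48), where a_t(p) := −∑_{x mod p} χ(4x³ + a x² + b x + c + d t). -/
open Finset

section SecondMomentHelpers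
variable {F : Type*} [Field F] [Fintype F] [DecidableEq F]

lemma my_sum_chi_sq :
    ∑ t : F, quadraticChar F t * quadraticChar F t = (Fintype.card F : ℤ) - 1 := by
  have h : ∀ t : F, t ≠ 0 → quadraticChar F t * quadraticChar F t = 1 := by
    intro t ht
    rw [← pow_two]; exact quadraticChar_sq_one ht
  rw [← Finset.sum_subset (Finset.subset_univ ({0}ᶜ : Finset F))]
  · rw [Finset.sum_congr rfl (fun t ht => h t (by simpa using ht))]
    have : 1 ≤ Fintype.card F := Fintype.card_pos
    simp [Finset.card_compl]
    push_cast [this]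
    ring
  · intro t _ ht
    simp only [Finset.mem_compl, Finset.mem_singleton, not_not] at ht
    simp [ht]

lemma my_sum_chi_mul_shift (hF : ringChar F ≠ 2) {w : F} (hw : w ≠ 0) :
    ∑ t : F, quadraticChar F t * quadraticChar F (t + w) = -1 := by
  have key : ∀ t : F, t ≠ 0 →
      quadraticChar F t * quadraticChar F (t + w) = quadraticChar F (1 + t⁻¹ * w) := by
    intro t ht
    have ht2 : t * (t + w) = t ^ 2 * (1 + t⁻¹ * w) := by field_simp
    rw [← map_mul, ht2, map_mul, quadraticChar_sq_one' ht, one_mul]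
  rw [← Finset.sum_subset (Finset.subset_univ ({0}ᶜ : Finset F))]
  · rw [Finset.sum_congr rfl (fun t ht => key t (by simpa using ht))]
    rw [show ∑ t ∈ ({0}ᶜ : Finset F), quadraticChar F (1 + t⁻¹ * w)
        = ∑ z ∈ ({1}ᶜ : Finset F), quadraticChar F z from
      Finset.sum_nbij' (fun t => 1 + t⁻¹ * w) (fun z => w / (z - 1))
        (by intro t ht; simp only [mem_compl, mem_singleton] at *
            intro h
            have h1 : t⁻¹ * w = 0 := by linear_combination h
            rcases mul_eq_zero.1 h1 with h' | h'
            · exact ht (by simpa using h')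
            · exact hw h')
        (by intro z hz; simp only [mem_compl, mem_singleton] at *
            have h1 : z - 1 ≠ 0 := sub_ne_zero.2 hz
            exact div_ne_zero hw h1)
        (by intro t ht; simp only [mem_compl, mem_singleton] at ht
            field_simp
            simp [hw])
        (by intro z hz; simp only [mem_compl, mem_singleton] at hz
            have h1 : z - 1 ≠ 0 := sub_ne_zero.2 hz
            field_simp
            ring)
        (fun _ _ => rfl)]
    · have h0 := quadraticChar_sum_zero hF
      have h2 : ∑ z ∈ ({1}ᶜ : Finset F), quadraticChar F z
          = (∑ z : F, quadraticChar F z) - quadraticChar F 1 := by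
        rw [← Finset.sum_compl_add_sum ({1} : Finset F)]
        simp
      rw [h2, h0]; simp
  · intro t _ ht
    simp only [Finset.mem_compl, Finset.mem_singleton, not_not] at ht
    simp [ht]

lemma my_sum_chi_shift2 (hF : ringChar F ≠ 2) (u v : F) :
    ∑ t : F, quadraticChar F (u + t) * quadraticChar F (v + t)
      = if u = v then (Fintype.card F : ℤ) - 1 else -1 := by
  have re : ∑ t : F, quadraticChar F (u + t) * quadraticChar F (v + t)
      = ∑ s : F, quadraticChar F s * quadraticChar F (s + (v - u)) := by
    rw [← Fintype.sum_equiv (Equiv.addLeft u)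
      (fun t => quadraticChar F (u + t) * quadraticChar F (v + t))
      (fun s => quadraticChar F s * quadraticChar F (s + (v - u)))]
    intro t
    congr 1 <;> congr 1 <;> simp [Equiv.addLeft] <;> ring
  rw [re]
  split_ifs with h
  · subst h
    simpa using my_sum_chi_sq (F := F)
  · have hw : v - u ≠ 0 := sub_ne_zero.2 (Ne.symm h)
    exact my_sum_chi_mul_shift hF hw


lemma my_card_roots_quadratic (hF : ringChar F ≠ 2) {α : F} (hα : α ≠ 0) (β γ : F) :
    ((Finset.univ.filter fun y : F => α * y ^ 2 + β * y + γ = 0).card : ℤ)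
      = quadraticChar F (β ^ 2 - 4 * α * γ) + 1 := by
  have h2 : (2 : F) ≠ 0 := Ring.two_ne_zero hF
  have h4α : (4 : F) * α ≠ 0 := by
    apply mul_ne_zero _ hα
    have : (4 : F) = 2 * 2 := by norm_num
    rw [this]; exact mul_ne_zero h2 h2
  have hcard : (Finset.univ.filter fun y : F => α * y ^ 2 + β * y + γ = 0).card
      = {x : F | x ^ 2 = β ^ 2 - 4 * α * γ}.toFinset.card := by
    apply Finset.card_nbij (fun y => 2 * α * y + β)
    · intro y hy
      simp only [Finset.mem_coe, mem_filter, mem_univ, true_and] at hy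
      simp only [Finset.mem_coe, Set.coe_toFinset, Set.mem_toFinset, Set.mem_setOf_eq]
      linear_combination (4 * α) * hy
    · intro y hy z hz hyz
      simp only [Finset.mem_coe, mem_filter, mem_univ, true_and] at *
      have : 2 * α * y = 2 * α * z := by linear_combination hyz
      exact mul_left_cancel₀ (mul_ne_zero h2 hα) this
    · intro x hx
      simp only [Set.coe_toFinset, Set.mem_setOf_eq] at hx
      refine ⟨(x - β) / (2 * α), ?_, ?_⟩
      · simp only [Finset.mem_coe, mem_filter, mem_univ, true_and]
        field_simp
        linear_combination hx
      · field_simp; ring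
  rw [hcard, quadraticChar_card_sqrts hF]

lemma my_sum_chi_sq_add (hF : ringChar F ≠ 2) (f : F) :
    ∑ x : F, (quadraticChar F (x ^ 2 + f) : ℤ)
      = if f = 0 then (Fintype.card F : ℤ) - 1 else -1 := by
  have fib : ∑ x : F, (quadraticChar F (x ^ 2 + f) : ℤ)
      = ∑ z : F, ∑ x ∈ Finset.univ.filter (fun x : F => x ^ 2 = z),
          (quadraticChar F (x ^ 2 + f) : ℤ) := by
    rw [Finset.sum_fiberwise]
  have inner : ∀ z : F, ∑ x ∈ Finset.univ.filter (fun x : F => x ^ 2 = z),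
      (quadraticChar F (x ^ 2 + f) : ℤ)
      = (quadraticChar F z + 1) * quadraticChar F (z + f) := by
    intro z
    rw [Finset.sum_congr rfl (fun x hx => by
      simp only [mem_filter] at hx
      rw [hx.2])]
    rw [Finset.sum_const, nsmul_eq_mul]
    congr 1
    rw [← quadraticChar_card_sqrts hF z, Set.toFinset_setOf]
  rw [fib, Finset.sum_congr rfl (fun z _ => inner z)]
  have expand : ∑ z : F, (quadraticChar F z + 1) * quadraticChar F (z + f)
      = (∑ z : F, quadraticChar F z * quadraticChar F (z + f))
        + ∑ z : F, quadraticChar F (z + f) := by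
    rw [← Finset.sum_add_distrib]
    exact Finset.sum_congr rfl (fun z _ => by ring)
  have shift0 : ∑ z : F, quadraticChar F (z + f) = 0 := by
    have h1 : ∑ z : F, quadraticChar F (z + f) = ∑ z : F, quadraticChar F z :=
      Fintype.sum_equiv (Equiv.addRight f) _ _ (fun z => rfl)
    rw [h1, quadraticChar_sum_zero hF]
  rw [expand, shift0, add_zero]
  split_ifs with h
  · subst h
    simpa using my_sum_chi_sq (F := F)
  · exact my_sum_chi_mul_shift hF h

lemma main_count (hF : ringChar F ≠ 2) (h3 : (3 : F) ≠ 0)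
    (A B C D : F) (hD : D ≠ 0) :
    ∑ t : F, (∑ x : F,
        quadraticChar F (4 * x ^ 3 + A * x ^ 2 + B * x + C + D * t)) ^ 2
      = (Fintype.card F : ℤ) * ((Fintype.card F : ℤ) + ((Fintype.card F : ℤ)
            + quadraticChar F (-48)
            * (if A ^ 2 - 12 * B = 0 then (Fintype.card F : ℤ) - 1 else -1))
          - (quadraticChar F (A ^ 2 - 12 * B) + 1)) - (Fintype.card F : ℤ) ^ 2 := by
  have h2 : (2 : F) ≠ 0 := Ring.two_ne_zero hF
  have h4 : (4 : F) ≠ 0 := by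
    rw [show (4 : F) = 2 * 2 by norm_num]; exact mul_ne_zero h2 h2
  have h12 : (12 : F) ≠ 0 := by
    rw [show (12 : F) = 4 * 3 by norm_num]; exact mul_ne_zero h4 h3
  have h36 : (36 : F) ≠ 0 := by
    rw [show (36 : F) = 12 * 3 by norm_num]; exact mul_ne_zero h12 h3
  have h48 : (-48 : F) ≠ 0 := by
    rw [show (-48 : F) = -(4 * 12) by norm_num, neg_ne_zero]; exact mul_ne_zero h4 h12
  set P : ℤ := (Fintype.card F : ℤ) with hP
  -- Step 1&2: expand square and swap sums
  have step1 : ∑ t : F, (∑ x : F,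
        quadraticChar F (4 * x ^ 3 + A * x ^ 2 + B * x + C + D * t)) ^ 2
      = ∑ x : F, ∑ y : F, ∑ t : F,
          (quadraticChar F (4 * x ^ 3 + A * x ^ 2 + B * x + C + D * t) : ℤ)
            * quadraticChar F (4 * y ^ 3 + A * y ^ 2 + B * y + C + D * t) := by
    rw [Finset.sum_congr rfl (fun t _ => by rw [pow_two, Finset.sum_mul_sum])]
    rw [Finset.sum_comm]
    exact Finset.sum_congr rfl (fun x _ => Finset.sum_comm)
  -- Step 3: inner sum over t
  have step3 : ∀ x y : F, ∑ t : F,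
        (quadraticChar F (4 * x ^ 3 + A * x ^ 2 + B * x + C + D * t) : ℤ)
          * quadraticChar F (4 * y ^ 3 + A * y ^ 2 + B * y + C + D * t)
      = ((P : ℤ) * (if (4 * x ^ 3 + A * x ^ 2 + B * x + C : F)
            = 4 * y ^ 3 + A * y ^ 2 + B * y + C then (1:ℤ) else 0) - 1) := by
    intro x y
    have re : ∑ t : F,
        (quadraticChar F (4 * x ^ 3 + A * x ^ 2 + B * x + C + D * t) : ℤ)
          * quadraticChar F (4 * y ^ 3 + A * y ^ 2 + B * y + C + D * t)
        = ∑ s : F, (quadraticChar F (4 * x ^ 3 + A * x ^ 2 + B * x + C + s) : ℤ)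
            * quadraticChar F (4 * y ^ 3 + A * y ^ 2 + B * y + C + s) :=
      Fintype.sum_equiv (Equiv.mulLeft₀ D hD)
        (fun t => (quadraticChar F (4 * x ^ 3 + A * x ^ 2 + B * x + C + D * t) : ℤ)
          * quadraticChar F (4 * y ^ 3 + A * y ^ 2 + B * y + C + D * t))
        (fun s => (quadraticChar F (4 * x ^ 3 + A * x ^ 2 + B * x + C + s) : ℤ)
          * quadraticChar F (4 * y ^ 3 + A * y ^ 2 + B * y + C + s))
        (fun t => rfl)
    rw [re, my_sum_chi_shift2 hF]
    split_ifs <;> ring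
  rw [step1, Finset.sum_congr rfl (fun x _ => Finset.sum_congr rfl (fun y _ => step3 x y))]
  -- reduce to counting
  have collect : ∑ x : F, ∑ y : F,
      ((P : ℤ) * (if (4 * x ^ 3 + A * x ^ 2 + B * x + C : F)
            = 4 * y ^ 3 + A * y ^ 2 + B * y + C then (1:ℤ) else 0) - 1)
      = P * (∑ x : F, ∑ y : F, (if (4 * x ^ 3 + A * x ^ 2 + B * x + C : F)
            = 4 * y ^ 3 + A * y ^ 2 + B * y + C then (1:ℤ) else 0)) - P ^ 2 := by
    simp only [Finset.sum_sub_distrib, ← Finset.mul_sum, Finset.sum_const,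
      Finset.card_univ, smul_eq_mul, mul_one, hP]
    ring
  rw [collect]
  -- the counting
  have split : ∀ x y : F, (if (4 * x ^ 3 + A * x ^ 2 + B * x + C : F)
          = 4 * y ^ 3 + A * y ^ 2 + B * y + C then (1:ℤ) else 0)
      = (if x = y then (1:ℤ) else 0)
        + (if 4 * y ^ 2 + (4 * x + A) * y + (4 * x ^ 2 + A * x + B) = 0 then (1:ℤ) else 0)
        - (if y = x then (if 12 * x ^ 2 + 2 * A * x + B = 0 then (1:ℤ) else 0) else 0) := by
    intro x y
    have hfac : ((4 * x ^ 3 + A * x ^ 2 + B * x + C : F)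
          = 4 * y ^ 3 + A * y ^ 2 + B * y + C) ↔ (x = y ∨
        4 * y ^ 2 + (4 * x + A) * y + (4 * x ^ 2 + A * x + B) = 0) := by
      constructor
      · intro h
        have h' : (x - y) * (4 * y ^ 2 + (4 * x + A) * y + (4 * x ^ 2 + A * x + B)) = 0 := by
          linear_combination h
        rcases mul_eq_zero.1 h' with h'' | h''
        · exact Or.inl (sub_eq_zero.1 h'')
        · exact Or.inr h''
      · rintro (h | h)
        · rw [h]
        · linear_combination (x - y) * h
    have hQx : (4 * x ^ 2 + (4 * x + A) * x + (4 * x ^ 2 + A * x + B) = 0)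
        ↔ (12 * x ^ 2 + 2 * A * x + B = 0) := by
      constructor <;> intro h <;> linear_combination h
    by_cases h1 : x = y
    · subst h1
      rw [if_pos rfl, if_pos rfl, if_pos rfl]
      by_cases h2' : 4 * x ^ 2 + (4 * x + A) * x + (4 * x ^ 2 + A * x + B) = 0
      · rw [if_pos h2', if_pos (hQx.1 h2')]; ring
      · rw [if_neg h2', if_neg (fun h => h2' (hQx.2 h))]; ring
    · have hyx : ¬ (y = x) := fun hh => h1 hh.symm
      rw [if_neg h1, if_neg hyx]
      by_cases h2' : 4 * y ^ 2 + (4 * x + A) * y + (4 * x ^ 2 + A * x + B) = 0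
      · rw [if_pos (hfac.2 (Or.inr h2')), if_pos h2']; ring
      · rw [if_neg (fun h => ((hfac.1 h).elim h1 h2')), if_neg h2']; ring
  rw [Finset.sum_congr rfl (fun x _ => Finset.sum_congr rfl (fun y _ => split x y))]
  have inner : ∀ x : F, ∑ y : F,
      ((if x = y then (1:ℤ) else 0)
        + (if 4 * y ^ 2 + (4 * x + A) * y + (4 * x ^ 2 + A * x + B) = 0 then (1:ℤ) else 0)
        - (if y = x then (if 12 * x ^ 2 + 2 * A * x + B = 0 then (1:ℤ) else 0) else 0))
      = 1 + (quadraticChar F ((4 * x + A) ^ 2 - 4 * 4 * (4 * x ^ 2 + A * x + B)) + 1)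
        - (if 12 * x ^ 2 + 2 * A * x + B = 0 then (1:ℤ) else 0) := by
    intro x
    rw [Finset.sum_sub_distrib, Finset.sum_add_distrib]
    congr 1
    · congr 1
      · simp
      · rw [Finset.sum_boole]
        push_cast
        rw [← my_card_roots_quadratic hF h4 (4 * x + A) (4 * x ^ 2 + A * x + B)]
    · rw [Finset.sum_ite_eq' Finset.univ x
        (fun _ => if 12 * x ^ 2 + 2 * A * x + B = 0 then (1:ℤ) else 0)]
      simp
  rw [Finset.sum_congr rfl (fun x _ => inner x)]
  -- now separate the three sums over x
  rw [Finset.sum_sub_distrib, Finset.sum_add_distrib, Finset.sum_add_distrib]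
  have s1 : ∑ _x : F, (1:ℤ) = P := by simp [hP]
  have sK : ∑ x : F, (if 12 * x ^ 2 + 2 * A * x + B = 0 then (1:ℤ) else 0)
      = quadraticChar F (A ^ 2 - 12 * B) + 1 := by
    rw [Finset.sum_boole]
    push_cast
    rw [show ((Finset.univ.filter fun x : F => 12 * x ^ 2 + 2 * A * x + B = 0).card : ℤ)
        = quadraticChar F ((2 * A) ^ 2 - 4 * 12 * B) + 1 from
      my_card_roots_quadratic hF h12 (2 * A) B]
    rw [show ((2 * A) ^ 2 - 4 * 12 * B : F) = 2 ^ 2 * (A ^ 2 - 12 * B) by ring,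
      map_mul, quadraticChar_sq_one' h2, one_mul]
  have sT : ∑ x : F, (quadraticChar F ((4 * x + A) ^ 2 - 4 * 4 * (4 * x ^ 2 + A * x + B)) : ℤ)
      = quadraticChar F (-48) * (if A ^ 2 - 12 * B = 0 then P - 1 else -1) := by
    set f' : F := -((A ^ 2 - 12 * B) * (36 : F)⁻¹) with hf'
    have re : ∑ x : F, (quadraticChar F ((4 * x + A) ^ 2
          - 4 * 4 * (4 * x ^ 2 + A * x + B)) : ℤ)
        = ∑ u : F, (quadraticChar F (-48 * (u ^ 2 + f')) : ℤ) := by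
      refine (Fintype.sum_equiv (Equiv.subRight (A * (12 : F)⁻¹)) _ _ (fun u => ?_)).symm
      congr 1
      show (-48 : F) * (u ^ 2 + f') = (4 * (u - A * (12:F)⁻¹) + A) ^ 2
          - 4 * 4 * (4 * (u - A * (12:F)⁻¹) ^ 2 + A * (u - A * (12:F)⁻¹) + B)
      rw [hf']
      field_simp
      ring
    rw [re]
    rw [Finset.sum_congr rfl (fun u _ => by rw [map_mul])]
    rw [← Finset.mul_sum, my_sum_chi_sq_add hF f']
    have hiff : f' = 0 ↔ A ^ 2 - 12 * B = 0 := by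
      rw [hf', neg_eq_zero, mul_eq_zero]
      simp [inv_eq_zero, h36]
    by_cases hc : A ^ 2 - 12 * B = 0
    · rw [if_pos hc, if_pos (hiff.2 hc)]
    · rw [if_neg hc, if_neg (fun h => hc (hiff.1 h))]
  rw [s1, sK, sT]
  ring

end SecondMomentHelpers

/-- For a prime `p ≥ 5`, integers `a, b, c, d` with `p ∤ d`, and the
one-parameter family `y² = 4x³ + a x² + b x + c + d t`: if `p ∤ a² - 12b` the
second-moment sum is `p² - p - p χ(-48) - p χ(a² - 12b)`, and if `p ∣ a² - 12b`
it is `p² - p + p(p - 1) χ(-48)`. -/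
theorem second_moment_family_linear_t (p : ℕ) [Fact p.Prime] (hp : 5 ≤ p)
    (a b c d : ℤ) (hd : ¬ (p : ℤ) ∣ d) :
    (¬ (p : ℤ) ∣ (a ^ 2 - 12 * b) →
      ∑ t : ZMod p,
        (-∑ x : ZMod p,
          legendreSym p (4 * (x.val : ℤ) ^ 3 + a * (x.val : ℤ) ^ 2 + b * (x.val : ℤ)
            + c + d * (t.val : ℤ))) ^ 2 =
        (p : ℤ) ^ 2 - (p : ℤ) - (p : ℤ) * legendreSym p (-48)
          - (p : ℤ) * legendreSym p (a ^ 2 - 12 * b)) ∧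
    ((p : ℤ) ∣ (a ^ 2 - 12 * b) →
      ∑ t : ZMod p,
        (-∑ x : ZMod p,
          legendreSym p (4 * (x.val : ℤ) ^ 3 + a * (x.val : ℤ) ^ 2 + b * (x.val : ℤ)
            + c + d * (t.val : ℤ))) ^ 2 =
        (p : ℤ) ^ 2 - (p : ℤ) + (p : ℤ) * ((p : ℤ) - 1) * legendreSym p (-48)) := by
  have hF : ringChar (ZMod p) ≠ 2 := by rw [ZMod.ringChar_zmod_n]; omega
  have h3 : (3 : ZMod p) ≠ 0 := by
    intro h
    rw [show (3 : ZMod p) = ((3 : ℕ) : ZMod p) by norm_cast,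
      ZMod.natCast_eq_zero_iff] at h
    have := Nat.le_of_dvd (by norm_num) h
    omega
  have hD : ((d : ZMod p)) ≠ 0 := by
    rw [Ne, ZMod.intCast_zmod_eq_zero_iff_dvd]
    exact hd
  have hcard : (Fintype.card (ZMod p) : ℤ) = (p : ℤ) := by rw [ZMod.card]
  have hval : ∀ x : ZMod p, ((x.val : ℤ) : ZMod p) = x := by
    intro x
    push_cast
    simp [ZMod.natCast_val, ZMod.cast_id]
  have hleg : ∀ x t : ZMod p,
      legendreSym p (4 * (x.val : ℤ) ^ 3 + a * (x.val : ℤ) ^ 2 + b * (x.val : ℤ)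
          + c + d * (t.val : ℤ))
        = quadraticChar (ZMod p) (4 * x ^ 3 + (a : ZMod p) * x ^ 2 + (b : ZMod p) * x
            + (c : ZMod p) + (d : ZMod p) * t) := by
    intro x t
    show quadraticChar (ZMod p) _ = _
    congr 1
    push_cast [hval]
    ring
  have hLHS : ∑ t : ZMod p,
      (-∑ x : ZMod p,
        legendreSym p (4 * (x.val : ℤ) ^ 3 + a * (x.val : ℤ) ^ 2 + b * (x.val : ℤ)
          + c + d * (t.val : ℤ))) ^ 2
      = ∑ t : ZMod p, (∑ x : ZMod p,
          quadraticChar (ZMod p) (4 * x ^ 3 + (a : ZMod p) * x ^ 2 + (b : ZMod p) * x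
            + (c : ZMod p) + (d : ZMod p) * t)) ^ 2 := by
    refine Finset.sum_congr rfl (fun t _ => ?_)
    rw [neg_pow]
    simp only [Finset.sum_congr rfl (fun x _ => hleg x t)]
    ring
  have key := main_count hF h3 (a : ZMod p) (b : ZMod p) (c : ZMod p) (d : ZMod p) hD
  rw [hcard] at key
  have hdisc : ((a ^ 2 - 12 * b : ℤ) : ZMod p)
      = (a : ZMod p) ^ 2 - 12 * (b : ZMod p) := by push_cast; ring
  have hlegd : legendreSym p (a ^ 2 - 12 * b)
      = quadraticChar (ZMod p) ((a : ZMod p) ^ 2 - 12 * (b : ZMod p)) := by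
    show quadraticChar (ZMod p) _ = _
    rw [hdisc]
  have hleg48 : legendreSym p (-48) = quadraticChar (ZMod p) (-48 : ZMod p) := by
    show quadraticChar (ZMod p) _ = _
    norm_num
  constructor
  · intro hnd
    have hne : (a : ZMod p) ^ 2 - 12 * (b : ZMod p) ≠ 0 := by
      rw [← hdisc, Ne, ZMod.intCast_zmod_eq_zero_iff_dvd]
      exact hnd
    rw [hLHS, key, if_neg hne, hlegd, hleg48]
    ring
  · intro hdd
    have heq : (a : ZMod p) ^ 2 - 12 * (b : ZMod p) = 0 := by
      rw [← hdisc, ZMod.intCast_zmod_eq_zero_iff_dvd]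
      exact hdd
    rw [hLHS, key, if_pos heq, heq, hleg48]
    simp only [MulChar.map_zero]
    ring
end
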